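/- Let R_1, …, R_n, R_{n+1} be exchangeable real-valued random variables (the non-conformity scores), and let k be the ⌈(1−α)(n+1)⌉-th smallest value among R_1, …, R_n (with k = +∞ if ⌈(1−α)(n+1)⌉ > n). Then ℙ(R_{n+1} ≤ k) ≥ 1 − α. -/

import Mathlib

open MeasureTheory
open scoped ENNReal NNReal

/-- The `m`-th smallest value among `v 0, …, v (n-1)` (for `1 ≤ m ≤ n`),
defined as the least `x` such that at least `m` of the values are `≤ x`. -/
noncomputable def orderStat (n : ℕ) (v : Fin n → ℝ) (m : ℕ) : ℝ :=
  sInf {x : ℝ | m ≤ (Finset.univ.filter (fun i => v i ≤ x)).card}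

open Finset in
lemma card_filter_perm {β : Type*} [Fintype β] [DecidableEq β] (e : Equiv.Perm β)
    (q : β → Prop) [DecidablePred q] :
    (univ.filter fun k => q (e k)).card = (univ.filter q).card := by
  apply Finset.card_bij (fun k _ => e k)
  · intro a ha; simp only [mem_filter, mem_univ, true_and] at ha ⊢; exact ha
  · intro a _ b _ h; exact e.injective h
  · intro b hb; simp only [mem_filter, mem_univ, true_and] at hb
    exact ⟨e.symm b, by simp [hb], by simp⟩

open Finset in
lemma card_filter_val_lt (n m : ℕ) (hm : m ≤ n) :
    (univ.filter fun k : Fin n => (k : ℕ) < m).card = m := by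
  have key : (univ.filter fun k : Fin n => (k : ℕ) < m).card = (Finset.range m).card := by
    apply Finset.card_bij (fun (k : Fin n) (_ : k ∈ univ.filter fun k : Fin n => (k : ℕ) < m) => (k : ℕ))
    · intro a ha; simp only [mem_filter, mem_univ, true_and] at ha
      exact Finset.mem_range.mpr ha
    · intro a _ b _ h; exact Fin.val_injective h
    · intro b hb
      have hb' := Finset.mem_range.mp hb
      exact ⟨⟨b, lt_of_lt_of_le hb' hm⟩, by simp [hb'], rfl⟩
  rw [key, Finset.card_range]

open Finset in
lemma le_orderStat_iff (n : ℕ) (v : Fin n → ℝ) (m : ℕ) (hm1 : 1 ≤ m) (hmn : m ≤ n) (t : ℝ) :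
    t ≤ orderStat n v m ↔ (univ.filter fun i => v i < t).card < m := by
  classical
  have hn : 0 < n := lt_of_lt_of_le hm1 hmn
  have hne : (univ : Finset (Fin n)).Nonempty := univ_nonempty_iff.mpr ⟨⟨0, hn⟩⟩
  set S : Set ℝ := {x : ℝ | m ≤ (univ.filter (fun i => v i ≤ x)).card} with hS
  have hSne : S.Nonempty := by
    refine ⟨univ.sup' hne v, ?_⟩
    have : univ.filter (fun i => v i ≤ univ.sup' hne v) = univ := by
      apply Finset.filter_true_of_mem
      intro i _; exact Finset.le_sup' v (mem_univ i)
    simp only [hS, Set.mem_setOf_eq, this, card_univ, Fintype.card_fin]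
    exact hmn
  have hSbdd : BddBelow S := by
    refine ⟨univ.inf' hne v, ?_⟩
    intro x hx
    have hcard : 1 ≤ (univ.filter (fun i => v i ≤ x)).card := le_trans hm1 hx
    obtain ⟨i, hi⟩ := Finset.card_pos.mp hcard
    simp only [mem_filter] at hi
    exact le_trans (Finset.inf'_le v (mem_univ i)) hi.2
  constructor
  · intro ht
    by_contra hcon
    push_neg at hcon
    have hFne : (univ.filter fun i => v i < t).Nonempty :=
      Finset.card_pos.mp (lt_of_lt_of_le hm1 hcon)
    set x := (univ.filter fun i => v i < t).sup' hFne v with hx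
    have hxt : x < t := by
      rw [hx, Finset.sup'_lt_iff]
      intro i hi; exact (mem_filter.mp hi).2
    have hxS : x ∈ S := by
      refine le_trans hcon (Finset.card_le_card ?_)
      intro i hi
      simp only [mem_filter, mem_univ, true_and] at hi ⊢
      exact Finset.le_sup' v (mem_filter.mpr ⟨mem_univ i, hi⟩)
    have := csInf_le hSbdd hxS
    have : orderStat n v m < t := lt_of_le_of_lt this hxt
    exact absurd ht (not_le.mpr this)
  · intro hcard
    apply le_csInf hSne
    intro x hx
    by_contra hcon
    push_neg at hcon
    have hsub : univ.filter (fun i => v i ≤ x) ⊆ univ.filter (fun i => v i < t) := by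
      intro i hi
      simp only [mem_filter, mem_univ, true_and] at hi ⊢
      exact lt_of_le_of_lt hi hcon
    exact absurd (le_trans hx (Finset.card_le_card hsub)) (not_le.mpr hcard)

open Finset in
lemma card_rank_lt (n m : ℕ) (hm : m ≤ n) (w : Fin n → ℝ) :
    m ≤ (univ.filter fun i : Fin n =>
      (univ.filter fun j : Fin n => w j < w i).card < m).card := by
  classical
  set e := Tuple.sort w with he
  have hmono : Monotone (w ∘ e) := Tuple.monotone_sort w
  set T := univ.filter fun k : Fin n => (k : ℕ) < m with hT
  have hTcard : T.card = m := card_filter_val_lt n m hm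
  have hsub : T.image e ⊆ univ.filter fun i : Fin n =>
      (univ.filter fun j : Fin n => w j < w i).card < m := by
    intro i hi
    obtain ⟨k, hk, rfl⟩ := Finset.mem_image.mp hi
    simp only [hT, mem_filter, mem_univ, true_and] at hk
    simp only [mem_filter, mem_univ, true_and]
    have h1 : (univ.filter fun j : Fin n => w j < w (e k)).card
        = (univ.filter fun k' : Fin n => w (e k') < w (e k)).card :=
      (card_filter_perm e (fun j => w j < w (e k))).symm
    have h2 : (univ.filter fun k' : Fin n => w (e k') < w (e k))
        ⊆ univ.filter fun k' : Fin n => (k' : ℕ) < (k : ℕ) := by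
      intro k' hk'
      simp only [mem_filter, mem_univ, true_and] at hk' ⊢
      by_contra hge
      push_neg at hge
      have : w (e k) ≤ w (e k') := hmono (Fin.le_def.mpr hge)
      exact absurd hk' (not_lt.mpr this)
    have h3 : (univ.filter fun k' : Fin n => (k' : ℕ) < (k : ℕ)).card = (k : ℕ) :=
      card_filter_val_lt n (k : ℕ) (le_of_lt k.isLt)
    calc (univ.filter fun j : Fin n => w j < w (e k)).card
        ≤ (k : ℕ) := by rw [h1, ← h3]; exact Finset.card_le_card h2
      _ < m := hk
  calc m = T.card := hTcard.symm
    _ = (T.image e).card := (Finset.card_image_of_injective T e.injective).symm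
    _ ≤ _ := Finset.card_le_card hsub

open Finset in
lemma card_castSucc_filter (n : ℕ) (w : Fin (n + 1) → ℝ) :
    (univ.filter fun j : Fin (n + 1) => w j < w (Fin.last n)).card
      = (univ.filter fun i : Fin n => w i.castSucc < w (Fin.last n)).card := by
  classical
  symm
  apply Finset.card_bij (fun i _ => Fin.castSucc i)
  · intro a ha; simp only [mem_filter, mem_univ, true_and] at ha ⊢; exact ha
  · intro a _ b _ h; exact Fin.castSucc_injective n h
  · intro j hj
    simp only [mem_filter, mem_univ, true_and] at hj
    have hne : j ≠ Fin.last n := by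
      intro h; rw [h] at hj; exact absurd hj (lt_irrefl _)
    obtain ⟨i, hi⟩ := Fin.exists_castSucc_eq.mpr hne
    exact ⟨i, by simp [mem_filter, hi, hj], hi⟩

theorem stmt_12 {Ω : Type*} [MeasurableSpace Ω] (P : Measure Ω) [IsProbabilityMeasure P]
    (n : ℕ) (α : ℝ) (hα : α ∈ Set.Ioo (0:ℝ) 1)
    (R : Fin (n + 1) → Ω → ℝ) (hmeas : ∀ i, Measurable (R i))
    (hexch : ∀ σ : Equiv.Perm (Fin (n + 1)),
      Measure.map (fun ω (i : Fin (n + 1)) => R (σ i) ω) P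
        = Measure.map (fun ω (i : Fin (n + 1)) => R i ω) P)
    (m : ℕ) (hm : m = ⌈(1 - α) * ((n : ℝ) + 1)⌉₊) :
    ENNReal.ofReal (1 - α) ≤
      P {ω | if m ≤ n then
              R (Fin.last n) ω ≤ orderStat n (fun i => R i.castSucc ω) m
            else True} := by
  classical
  obtain ⟨hα0, hα1⟩ := hα
  by_cases hmn : m ≤ n
  swap
  · simp only [if_neg hmn]
    have h1 : {ω : Ω | True} = Set.univ := by ext ω; simp
    rw [h1, measure_univ]
    exact ENNReal.ofReal_le_one.mpr (by linarith)
  simp only [if_pos hmn]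
  have hm1 : 1 ≤ m := by
    rw [hm]
    exact Nat.ceil_pos.mpr (mul_pos (by linarith) (by positivity))
  set V : Ω → (Fin (n + 1) → ℝ) := fun ω i => R i ω with hV
  have hVmeas : Measurable V := measurable_pi_lambda _ hmeas
  set μ := Measure.map V P with hμ
  have hμprob : IsProbabilityMeasure μ := Measure.isProbabilityMeasure_map hVmeas.aemeasurable
  set A : Fin (n + 1) → Set (Fin (n + 1) → ℝ) :=
    fun i => {w | (Finset.univ.filter fun j => w j < w i).card < m} with hA
  -- measurability of A i
  have hAmeas : ∀ i, MeasurableSet (A i) := by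
    intro i
    have hrepr : A i = (fun w : Fin (n + 1) → ℝ =>
        ∑ j : Fin (n + 1), if w j < w i then (1 : ℝ) else 0) ⁻¹' (Set.Iio (m : ℝ)) := by
      ext w
      simp only [hA, Set.mem_setOf_eq, Set.mem_preimage, Set.mem_Iio]
      have hcast : (∑ j : Fin (n + 1), if w j < w i then (1 : ℝ) else 0)
          = ((Finset.univ.filter fun j => w j < w i).card : ℝ) := by
        rw [Finset.card_filter]
        push_cast
        rfl
      rw [hcast]
      exact_mod_cast Iff.rfl
    rw [hrepr]
    have hFmeas : Measurable (fun w : Fin (n + 1) → ℝ =>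
        ∑ j : Fin (n + 1), if w j < w i then (1 : ℝ) else 0) := by
      apply Finset.measurable_sum
      intro j _
      exact Measurable.ite (measurableSet_lt (measurable_pi_apply j) (measurable_pi_apply i))
        measurable_const measurable_const
    exact hFmeas measurableSet_Iio
  -- all A i have the same measure
  have hAeq : ∀ i, μ (A i) = μ (A (Fin.last n)) := by
    intro i
    set σ := Equiv.swap i (Fin.last n) with hσ
    have hcomp : Measurable (fun w : Fin (n + 1) → ℝ => w ∘ σ) :=
      measurable_pi_lambda _ (fun j => measurable_pi_apply _)
    have hpre : (fun w : Fin (n + 1) → ℝ => w ∘ σ) ⁻¹' (A (Fin.last n)) = A i := by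
      ext w
      simp only [Set.mem_preimage, hA, Set.mem_setOf_eq, Function.comp, hσ,
        Equiv.swap_apply_right]
      rw [card_filter_perm (Equiv.swap i (Fin.last n)) (fun j => w j < w i)]
    rw [← hpre, ← Measure.map_apply hcomp (hAmeas _)]
    congr 1
    rw [hμ, Measure.map_map hcomp hVmeas]
    have hfun : ((fun w : Fin (n + 1) → ℝ => w ∘ σ) ∘ V)
        = fun ω (j : Fin (n + 1)) => R (σ j) ω := rfl
    rw [hfun, hexch σ]
  -- sum lower bound
  have hsum : (m : ℝ≥0∞) ≤ ∑ i : Fin (n + 1), μ (A i) := by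
    have hpt : ∀ w, (m : ℝ≥0∞)
        ≤ ∑ i : Fin (n + 1), (A i).indicator (fun _ => (1 : ℝ≥0∞)) w := by
      intro w
      have hcount := card_rank_lt (n + 1) m (by omega) w
      have heq : ∑ i : Fin (n + 1), (A i).indicator (fun _ => (1 : ℝ≥0∞)) w
          = ((Finset.univ.filter fun i : Fin (n + 1) =>
              (Finset.univ.filter fun j => w j < w i).card < m).card : ℝ≥0∞) := by
        rw [Finset.card_filter]
        push_cast
        apply Finset.sum_congr rfl
        intro i _
        simp only [Set.indicator, hA, Set.mem_setOf_eq]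
      rw [heq]
      exact_mod_cast hcount
    calc (m : ℝ≥0∞) = ∫⁻ _, (m : ℝ≥0∞) ∂μ := by simp
      _ ≤ ∫⁻ w, ∑ i : Fin (n + 1), (A i).indicator (fun _ => (1 : ℝ≥0∞)) w ∂μ :=
          lintegral_mono hpt
      _ = ∑ i : Fin (n + 1), ∫⁻ w, (A i).indicator (fun _ => (1 : ℝ≥0∞)) w ∂μ :=
          lintegral_finset_sum _ (fun i _ => (measurable_const.indicator (hAmeas i)))
      _ = ∑ i : Fin (n + 1), μ (A i) := by
          apply Finset.sum_congr rfl
          intro i _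
          exact lintegral_indicator_one (hAmeas i)
  have hlast : (m : ℝ≥0∞) ≤ ((n : ℝ≥0∞) + 1) * μ (A (Fin.last n)) := by
    calc (m : ℝ≥0∞) ≤ ∑ i : Fin (n + 1), μ (A i) := hsum
      _ = ∑ _i : Fin (n + 1), μ (A (Fin.last n)) := Finset.sum_congr rfl (fun i _ => hAeq i)
      _ = ((n : ℝ≥0∞) + 1) * μ (A (Fin.last n)) := by
          rw [Finset.sum_const, Finset.card_univ, Fintype.card_fin, nsmul_eq_mul]
          push_cast
          ring
  have hgoal : ENNReal.ofReal (1 - α) ≤ μ (A (Fin.last n)) := by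
    have hreal : (1 - α) * ((n : ℝ) + 1) ≤ (m : ℝ) := by
      rw [hm]; exact Nat.le_ceil _
    have h1 : ENNReal.ofReal (1 - α) * ((n : ℝ≥0∞) + 1) ≤ (m : ℝ≥0∞) := by
      have hcast : ((n : ℝ≥0∞) + 1) = ENNReal.ofReal ((n : ℝ) + 1) := by
        rw [ENNReal.ofReal_add (by positivity) zero_le_one]
        simp [ENNReal.ofReal_natCast]
      rw [hcast, ← ENNReal.ofReal_mul (by linarith)]
      calc ENNReal.ofReal ((1 - α) * ((n : ℝ) + 1)) ≤ ENNReal.ofReal (m : ℝ) :=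
            ENNReal.ofReal_le_ofReal hreal
        _ = (m : ℝ≥0∞) := ENNReal.ofReal_natCast m
    have h2 : ENNReal.ofReal (1 - α) * ((n : ℝ≥0∞) + 1)
        ≤ μ (A (Fin.last n)) * ((n : ℝ≥0∞) + 1) := by
      rw [mul_comm (μ (A (Fin.last n)))]
      exact le_trans h1 hlast
    have hne0 : ((n : ℝ≥0∞) + 1) ≠ 0 := by simp
    have hnetop : ((n : ℝ≥0∞) + 1) ≠ ⊤ := by
      simp [ENNReal.add_ne_top, ENNReal.natCast_ne_top]
    exact (ENNReal.mul_le_mul_iff_left hne0 hnetop).mp h2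
  have hset : {ω | R (Fin.last n) ω ≤ orderStat n (fun i => R i.castSucc ω) m}
      = V ⁻¹' (A (Fin.last n)) := by
    ext ω
    simp only [Set.mem_setOf_eq, Set.mem_preimage, hA, hV]
    rw [le_orderStat_iff n (fun i => R i.castSucc ω) m hm1 hmn (R (Fin.last n) ω),
      card_castSucc_filter n (fun i => R i ω)]
  rw [hset]
  exact le_trans hgoal (le_of_eq (Measure.map_apply hVmeas (hAmeas _)))
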